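/- Let I, J ⊆ k^× be two disjoint Z⋊Z/2-orbits, each avoiding ±1, let ν = ν₁ + ν₂ ∈ ᶿN(I ∪ J) with ν₁ ∈ ᶿNI and ν₂ ∈ ᶿNJ, and in the separated VV algebra 𝔚_ν set e = Σ e(ij), the sum over all i ∈ ᶿI^{ν₁} and j ∈ ᶿJ^{ν₂} of the idempotents indexed by the concatenated tuples. Then e is full in 𝔚_ν, i.e. 𝔚_ν e 𝔚_ν = 𝔚_ν. -/
import Mathlib


open scoped TensorProduct
open CategoryTheory

noncomputable section

namespace VVPaper

variable {k : Type} [Field k]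

/-! ## Quiver combinatorics -/

/-- There is an arrow `a → b` in the quiver `Γ` iff `a = p² b` (arrows `p² i → i`). -/
def Arrow (p a b : kˣ) : Prop := a = p ^ 2 * b

/-- The orbit of `lam` under the `ℤ ⋊ ℤ/2`-action `(n, ε) · λ = p^(2n) λ^ε` on `kˣ`. -/
def orbit (p lam : kˣ) : Set kˣ :=
  {x | ∃ n : ℤ, x = p ^ (2 * n) * lam ∨ x = p ^ (2 * n) * lam⁻¹}

/-- The half-orbit `I⁺ = {p^(2n) λ : n ∈ ℤ}`. -/
def halfOrbit (p lam : kˣ) : Set kˣ := {x | ∃ n : ℤ, x = p ^ (2 * n) * lam}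

/-- `ν ∈ ᶿℕI`: a finitely supported dimension vector, supported on `I` and `θ`-invariant
(`θ i = i⁻¹`). -/
def IsDimVec (I : Set kˣ) (ν : kˣ →₀ ℕ) : Prop :=
  (∀ a : kˣ, ν a ≠ 0 → a ∈ I) ∧ (∀ a : kˣ, ν a⁻¹ = ν a)

/-- The height `|ν|` of a dimension vector. -/
def height (ν : kˣ →₀ ℕ) : ℕ := ν.sum fun _ n => n

/-- `i = (i₁, …, i_m) ∈ ᶿI^ν`, i.e. `Σ i_k + Σ i_k⁻¹ = ν`. -/
def IsThetaSeq (ν : kˣ →₀ ℕ) {m : ℕ} (i : Fin m → kˣ) : Prop :=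
  (∑ j : Fin m, (Finsupp.single (i j) 1 + Finsupp.single (i j)⁻¹ 1)) = ν

/-- `i = (i₁, …, i_m) ∈ I^ν̃`, i.e. `Σ i_k = ν̃` (for KLR algebras). -/
def IsSeq (ν : kˣ →₀ ℕ) {m : ℕ} (i : Fin m → kˣ) : Prop :=
  (∑ j : Fin m, Finsupp.single (i j) 1) = ν

open Classical in
/-- The (finite) set of all sequences in `ᶿI^ν`. -/
def thetaSeqs (ν : kˣ →₀ ℕ) (m : ℕ) : Finset (Fin m → kˣ) :=
  (Fintype.piFinset fun _ : Fin m => ν.support).filter fun i => IsThetaSeq ν i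

open Classical in
/-- The (finite) set of all sequences in `I^ν̃`. -/
def seqs (ν : kˣ →₀ ℕ) (m : ℕ) : Finset (Fin m → kˣ) :=
  (Fintype.piFinset fun _ : Fin m => ν.support).filter fun i => IsSeq ν i

/-! ## Generators and relations for VV and KLR algebras -/

/-- Generators of a VV algebra (or of a KLR algebra, discarding `pi`):
polynomial generators `x`, intertwiners `sig`, idempotents `idem` and the extra generator `pi`. -/
inductive Gen (V : Type) (m : ℕ) : Type
  | x : Fin m → Gen V m
  | sig : Fin (m - 1) → Gen V m
  | idem : (Fin m → V) → Gen V m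
  | pi : Gen V m

/-- The free algebra on the generators. -/
abbrev FA (k : Type) [Field k] (m : ℕ) : Type := FreeAlgebra k (Gen kˣ m)

def X {m : ℕ} (j : Fin m) : FA k m := FreeAlgebra.ι k (Gen.x j)
def Sg {m : ℕ} (s : Fin (m - 1)) : FA k m := FreeAlgebra.ι k (Gen.sig s)
def E {m : ℕ} (i : Fin m → kˣ) : FA k m := FreeAlgebra.ι k (Gen.idem i)
def Pg {m : ℕ} : FA k m := FreeAlgebra.ι k (Gen.pi : Gen kˣ m)

/-- `σ_k` exchanges positions `k` and `k+1`: the lower position. -/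
def lo {m : ℕ} (s : Fin (m - 1)) : Fin m := ⟨s.1, by have := s.2; omega⟩

/-- The upper position `k+1`. -/
def hi {m : ℕ} (s : Fin (m - 1)) : Fin m := ⟨s.1 + 1, by have := s.2; omega⟩

/-- The action of the simple transposition `s_k` on sequences. -/
def swapAt {V : Type} {m : ℕ} (s : Fin (m - 1)) (i : Fin m → V) : Fin m → V :=
  i ∘ Equiv.swap (lo s) (hi s)

/-- The defining relations of the VV algebra (when `withPi = true`) and of the KLR algebra
(when `withPi = false`), for the quiver with arrows `p² i → i`, parameter `q`, sequences
satisfying `P` (whose collection is the finite set `T`). -/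
inductive Rel (p q : kˣ) {m : ℕ} (P : (Fin m → kˣ) → Prop) (T : Finset (Fin m → kˣ))
    (withPi : Bool) : FA k m → FA k m → Prop
  -- the e(i) are orthogonal idempotents summing to 1
  | idem_mul (i : Fin m → kˣ) : Rel p q P T withPi (E i * E i) (E i)
  | idem_orth (i j : Fin m → kˣ) (h : i ≠ j) : Rel p q P T withPi (E i * E j) 0
  | idem_zero (i : Fin m → kˣ) (h : ¬ P i) : Rel p q P T withPi (E i) 0
  | idem_sum : Rel p q P T withPi (∑ i ∈ T, E i) 1
  -- the x's commute with each other and with the idempotents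
  | x_mul_comm (a b : Fin m) : Rel p q P T withPi (X a * X b) (X b * X a)
  | x_idem (a : Fin m) (i : Fin m → kˣ) : Rel p q P T withPi (X a * E i) (E i * X a)
  -- σ_k e(i) = e(s_k i) σ_k
  | sig_idem (s : Fin (m - 1)) (i : Fin m → kˣ) :
      Rel p q P T withPi (Sg s * E i) (E (swapAt s i) * Sg s)
  -- quadratic relations for σ_k
  | sig_sq_eq (s : Fin (m - 1)) (i : Fin m → kˣ) (h : i (lo s) = i (hi s)) :
      Rel p q P T withPi (Sg s * Sg s * E i) 0
  | sig_sq_none (s : Fin (m - 1)) (i : Fin m → kˣ) (hne : i (lo s) ≠ i (hi s))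
      (h1 : ¬ Arrow p (i (lo s)) (i (hi s))) (h2 : ¬ Arrow p (i (hi s)) (i (lo s))) :
      Rel p q P T withPi (Sg s * Sg s * E i) (E i)
  | sig_sq_from (s : Fin (m - 1)) (i : Fin m → kˣ)
      (h1 : Arrow p (i (hi s)) (i (lo s))) (h2 : ¬ Arrow p (i (lo s)) (i (hi s))) :
      Rel p q P T withPi (Sg s * Sg s * E i) ((X (hi s) - X (lo s)) * E i)
  | sig_sq_to (s : Fin (m - 1)) (i : Fin m → kˣ)
      (h1 : Arrow p (i (lo s)) (i (hi s))) (h2 : ¬ Arrow p (i (hi s)) (i (lo s))) :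
      Rel p q P T withPi (Sg s * Sg s * E i) ((X (lo s) - X (hi s)) * E i)
  | sig_sq_both (s : Fin (m - 1)) (i : Fin m → kˣ)
      (h1 : Arrow p (i (lo s)) (i (hi s))) (h2 : Arrow p (i (hi s)) (i (lo s))) :
      Rel p q P T withPi (Sg s * Sg s * E i) ((X (hi s) - X (lo s)) * (X (lo s) - X (hi s)) * E i)
  -- far-apart σ's commute
  | sig_comm (s t : Fin (m - 1)) (h : s.1 + 1 < t.1) :
      Rel p q P T withPi (Sg s * Sg t) (Sg t * Sg s)
  -- braid relations
  | braid_triv (s : Fin (m - 1)) (hs : s.1 + 1 < m - 1) (i : Fin m → kˣ)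
      (h : i (lo s) ≠ i ⟨s.1 + 2, by omega⟩ ∨
        (¬ Arrow p (i (lo s)) (i (hi s)) ∧ ¬ Arrow p (i (hi s)) (i (lo s)))) :
      Rel p q P T withPi (Sg ⟨s.1 + 1, hs⟩ * Sg s * Sg ⟨s.1 + 1, hs⟩ * E i)
        (Sg s * Sg ⟨s.1 + 1, hs⟩ * Sg s * E i)
  | braid_to (s : Fin (m - 1)) (hs : s.1 + 1 < m - 1) (i : Fin m → kˣ)
      (he : i (lo s) = i ⟨s.1 + 2, by omega⟩)
      (h1 : Arrow p (i (lo s)) (i (hi s))) (h2 : ¬ Arrow p (i (hi s)) (i (lo s))) :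
      Rel p q P T withPi (Sg ⟨s.1 + 1, hs⟩ * Sg s * Sg ⟨s.1 + 1, hs⟩ * E i)
        (Sg s * Sg ⟨s.1 + 1, hs⟩ * Sg s * E i + E i)
  | braid_from (s : Fin (m - 1)) (hs : s.1 + 1 < m - 1) (i : Fin m → kˣ)
      (he : i (lo s) = i ⟨s.1 + 2, by omega⟩)
      (h1 : Arrow p (i (hi s)) (i (lo s))) (h2 : ¬ Arrow p (i (lo s)) (i (hi s))) :
      Rel p q P T withPi (Sg ⟨s.1 + 1, hs⟩ * Sg s * Sg ⟨s.1 + 1, hs⟩ * E i)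
        (Sg s * Sg ⟨s.1 + 1, hs⟩ * Sg s * E i - E i)
  | braid_both (s : Fin (m - 1)) (hs : s.1 + 1 < m - 1) (i : Fin m → kˣ)
      (he : i (lo s) = i ⟨s.1 + 2, by omega⟩)
      (h1 : Arrow p (i (lo s)) (i (hi s))) (h2 : Arrow p (i (hi s)) (i (lo s))) :
      Rel p q P T withPi (Sg ⟨s.1 + 1, hs⟩ * Sg s * Sg ⟨s.1 + 1, hs⟩ * E i)
        (Sg s * Sg ⟨s.1 + 1, hs⟩ * Sg s * E i +
          ((2 : FA k m) * X (hi s) - X ⟨s.1 + 2, by omega⟩ - X (lo s)) * E i)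
  -- mixed relations for σ and x
  | sig_x_lo (s : Fin (m - 1)) (i : Fin m → kˣ) (h : i (lo s) = i (hi s)) :
      Rel p q P T withPi (Sg s * X (lo s) * E i) (X (hi s) * Sg s * E i - E i)
  | sig_x_hi (s : Fin (m - 1)) (i : Fin m → kˣ) (h : i (lo s) = i (hi s)) :
      Rel p q P T withPi (Sg s * X (hi s) * E i) (X (lo s) * Sg s * E i + E i)
  | sig_x (s : Fin (m - 1)) (l : Fin m) (i : Fin m → kˣ)
      (h : i (lo s) ≠ i (hi s) ∨ (l ≠ lo s ∧ l ≠ hi s)) :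
      Rel p q P T withPi (Sg s * X l * E i) (X (Equiv.swap (lo s) (hi s) l) * Sg s * E i)
  -- relations involving π (only for the VV algebra)
  | pi_idem (hw : withPi = true) (h0 : 0 < m) (i : Fin m → kˣ) :
      Rel p q P T withPi (Pg * E i) (E (Function.update i ⟨0, h0⟩ (i ⟨0, h0⟩)⁻¹) * Pg)
  | pi_sq_q (hw : withPi = true) (h0 : 0 < m) (i : Fin m → kˣ) (h : i ⟨0, h0⟩ = q) :
      Rel p q P T withPi (Pg * Pg * E i) (X ⟨0, h0⟩ * E i)
  | pi_sq_qinv (hw : withPi = true) (h0 : 0 < m) (i : Fin m → kˣ) (h : i ⟨0, h0⟩ = q⁻¹) :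
      Rel p q P T withPi (Pg * Pg * E i) (-(X ⟨0, h0⟩ * E i))
  | pi_sq_one (hw : withPi = true) (h0 : 0 < m) (i : Fin m → kˣ)
      (h1 : i ⟨0, h0⟩ ≠ q) (h2 : i ⟨0, h0⟩ ≠ q⁻¹) :
      Rel p q P T withPi (Pg * Pg * E i) (E i)
  | pi_x_zero (hw : withPi = true) (h0 : 0 < m) :
      Rel p q P T withPi (Pg * X ⟨0, h0⟩) (-(X ⟨0, h0⟩ * Pg))
  | pi_x (hw : withPi = true) (l : Fin m) (h : 0 < l.1) :
      Rel p q P T withPi (Pg * X l) (X l * Pg)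
  | pi_sig (hw : withPi = true) (s : Fin (m - 1)) (h : 0 < s.1) :
      Rel p q P T withPi (Pg * Sg s) (Sg s * Pg)
  | sig_pi_plus (hw : withPi = true) (h1 : 0 < m - 1) (i : Fin m → kˣ)
      (ha : i ⟨0, by omega⟩ = q) (hb : i ⟨1, by omega⟩ = q⁻¹) :
      Rel p q P T withPi (Sg ⟨0, h1⟩ * Pg * (Sg ⟨0, h1⟩ * Pg) * E i)
        (Pg * Sg ⟨0, h1⟩ * (Pg * Sg ⟨0, h1⟩) * E i + Sg ⟨0, h1⟩ * E i)
  | sig_pi_minus (hw : withPi = true) (h1 : 0 < m - 1) (i : Fin m → kˣ)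
      (ha : i ⟨0, by omega⟩ = q⁻¹) (hb : i ⟨1, by omega⟩ = q) :
      Rel p q P T withPi (Sg ⟨0, h1⟩ * Pg * (Sg ⟨0, h1⟩ * Pg) * E i)
        (Pg * Sg ⟨0, h1⟩ * (Pg * Sg ⟨0, h1⟩) * E i - Sg ⟨0, h1⟩ * E i)
  | sig_pi_zero (hw : withPi = true) (h1 : 0 < m - 1) (i : Fin m → kˣ)
      (hc : ¬ (i ⟨0, by omega⟩ = q ∧ i ⟨1, by omega⟩ = q⁻¹))
      (hc' : ¬ (i ⟨0, by omega⟩ = q⁻¹ ∧ i ⟨1, by omega⟩ = q)) :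
      Rel p q P T withPi (Sg ⟨0, h1⟩ * Pg * (Sg ⟨0, h1⟩ * Pg) * E i)
        (Pg * Sg ⟨0, h1⟩ * (Pg * Sg ⟨0, h1⟩) * E i)
  -- for the KLR algebra, there is no generator π
  | pi_zero (hw : withPi = false) : Rel p q P T withPi Pg 0

/-- The VV algebra `𝔚_ν` attached to `p`, `q` and a dimension vector `ν` of height `2m`. -/
@[reducible] def VV (k : Type) [Field k] (p q : kˣ) (ν : kˣ →₀ ℕ) (m : ℕ) : Type :=
  RingQuot (Rel p q (IsThetaSeq ν) (thetaSeqs ν m) true)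

/-- The KLR algebra `R_ν̃` attached to `p` and a dimension vector `ν̃` of height `m`. -/
@[reducible] def KLR (k : Type) [Field k] (p : kˣ) (ν : kˣ →₀ ℕ) (m : ℕ) : Type :=
  RingQuot (Rel p 1 (IsSeq ν) (seqs ν m) false)

/-- The canonical map from the free algebra onto the VV algebra. -/
def vmk (p q : kˣ) (ν : kˣ →₀ ℕ) (m : ℕ) : FA k m →ₐ[k] VV k p q ν m :=
  RingQuot.mkAlgHom k _

/-- The canonical map from the free algebra onto the KLR algebra. -/
def kmk (p : kˣ) (ν : kˣ →₀ ℕ) (m : ℕ) : FA k m →ₐ[k] KLR k p ν m :=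
  RingQuot.mkAlgHom k _

/-- Two `k`-algebras are Morita equivalent if there is a `k`-linear equivalence between their
categories of (left) modules. -/
def MoritaEquiv (k : Type) [Field k] (A B : Type) [Ring A] [Ring B]
    [Algebra k A] [Algebra k B] : Prop :=
  ∃ (e : ModuleCat.{0} A ≌ ModuleCat.{0} B) (_ : e.functor.Additive), e.functor.Linear k

end VVPaper

namespace VVPaper

section Aux

variable {k : Type} [Field k]

lemma orbit_inv_mem {p lam x : kˣ} (h : x ∈ orbit p lam) : x⁻¹ ∈ orbit p lam := by
  obtain ⟨n, h | h⟩ := h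
  · exact ⟨-n, Or.inr (by rw [h, mul_inv, ← zpow_neg, show -(2 * n) = 2 * -n by ring])⟩
  · exact ⟨-n, Or.inl (by rw [h, mul_inv, inv_inv, ← zpow_neg, show -(2 * n) = 2 * -n by ring])⟩

lemma orbit_p2_mul_mem {p lam x : kˣ} (h : x ∈ orbit p lam) : p ^ 2 * x ∈ orbit p lam := by
  obtain ⟨n, h | h⟩ := h
  · refine ⟨n + 1, Or.inl ?_⟩
    rw [h, ← mul_assoc, ← zpow_natCast p 2, ← zpow_add, show ((2:ℕ):ℤ) + 2 * n = 2 * (n+1) by push_cast; ring]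
  · refine ⟨n + 1, Or.inr ?_⟩
    rw [h, ← mul_assoc, ← zpow_natCast p 2, ← zpow_add, show ((2:ℕ):ℤ) + 2 * n = 2 * (n+1) by push_cast; ring]

lemma finsupp_split {I J : Set kˣ} (hd : ∀ x, x ∈ I → x ∈ J → False)
    {ν₁ ν₂ A B : kˣ →₀ ℕ}
    (hν₁ : ∀ a, ν₁ a ≠ 0 → a ∈ I) (hν₂ : ∀ a, ν₂ a ≠ 0 → a ∈ J)
    (hA : ∀ a, A a ≠ 0 → a ∈ I) (hB : ∀ a, B a ≠ 0 → a ∈ J)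
    (h : A + B = ν₁ + ν₂) : A = ν₁ ∧ B = ν₂ := by
  have key : ∀ a, A a = ν₁ a ∧ B a = ν₂ a := by
    intro a
    have h' : A a + B a = ν₁ a + ν₂ a := by
      rw [← Finsupp.add_apply, ← Finsupp.add_apply, h]
    by_cases ha : a ∈ I
    · have hB0 : B a = 0 := by by_contra hb; exact hd a ha (hB a hb)
      have hν20 : ν₂ a = 0 := by by_contra hb; exact hd a ha (hν₂ a hb)
      omega
    · have hA0 : A a = 0 := by by_contra hb; exact ha (hA a hb)
      have hν10 : ν₁ a = 0 := by by_contra hb; exact ha (hν₁ a hb)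
      omega
  exact ⟨Finsupp.ext fun a => (key a).1, Finsupp.ext fun a => (key a).2⟩

lemma mem_of_sum_pair_apply_ne_zero {α : Type} (s : Finset α) (v : α → kˣ) {I : Set kˣ}
    (hv : ∀ j ∈ s, v j ∈ I) (hinv : ∀ x ∈ I, x⁻¹ ∈ I) (x : kˣ)
    (hx : (∑ j ∈ s, (Finsupp.single (v j) 1 + Finsupp.single (v j)⁻¹ 1) : kˣ →₀ ℕ) x ≠ 0) :
    x ∈ I := by
  classical
  rw [Finsupp.finset_sum_apply] at hx
  obtain ⟨j, hj, hne⟩ := Finset.exists_ne_zero_of_sum_ne_zero hx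
  rw [Finsupp.add_apply, Finsupp.single_apply, Finsupp.single_apply] at hne
  split_ifs at hne with h1 h2 h2
  · exact h1 ▸ hv j hj
  · exact h1 ▸ hv j hj
  · exact h2 ▸ hinv _ (hv j hj)
  · exact absurd rfl hne

lemma height_add (f g : kˣ →₀ ℕ) : height (f + g) = height f + height g :=
  Finsupp.sum_add_index' (fun _ => rfl) (fun _ _ _ => rfl)

lemma height_single (x : kˣ) (n : ℕ) : height (Finsupp.single x n) = n :=
  Finsupp.sum_single_index rfl

lemma height_sum_pair {α : Type} (s : Finset α) (v : α → kˣ) :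
    height (∑ j ∈ s, (Finsupp.single (v j) 1 + Finsupp.single (v j)⁻¹ 1)) = 2 * s.card := by
  classical
  induction s using Finset.induction with
  | empty => simp [height]
  | @insert a s ha ih =>
      rw [Finset.sum_insert ha, height_add, height_add, height_single, height_single, ih,
        Finset.card_insert_of_notMem ha]
      ring

lemma mem_thetaSeqs {ν : kˣ →₀ ℕ} {m : ℕ} {i : Fin m → kˣ} :
    i ∈ thetaSeqs ν m ↔ (∀ j, i j ∈ ν.support) ∧ IsThetaSeq ν i := by
  classical
  rw [thetaSeqs, Finset.mem_filter, Fintype.mem_piFinset]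

lemma support_of_isThetaSeq {ν : kˣ →₀ ℕ} {m : ℕ} {i : Fin m → kˣ}
    (h : IsThetaSeq ν i) (j : Fin m) : i j ∈ ν.support := by
  classical
  rw [Finsupp.mem_support_iff, ← h, Finsupp.finset_sum_apply]
  intro h0
  rw [Finset.sum_eq_zero_iff] at h0
  have := h0 j (Finset.mem_univ j)
  rw [Finsupp.add_apply, Finsupp.single_eq_same] at this
  omega

end Aux

/-- Lemma 2.5.  For two disjoint orbits `I, J` and `ν = ν₁ + ν₂`, the
idempotent `e = Σ_{i ∈ ᶿI^{ν₁}, j ∈ ᶿJ^{ν₂}} e(ij)` is full in the separated VV algebra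
`𝔚_ν`, i.e. `𝔚_ν e 𝔚_ν = 𝔚_ν`. -/
theorem separated_idempotent_full
    (k : Type) [Field k] (hchar : (2 : k) ≠ 0)
    (p q : kˣ) (hp1 : p ≠ 1) (hp2 : p ≠ -1)
    (hpq : ∀ n : ℤ, p ≠ q ^ n) (hqp : ∀ n : ℤ, q ≠ p ^ n)
    (I J : Set kˣ) (hI : ∃ lam : kˣ, I = orbit p lam) (hJ : ∃ mu : kˣ, J = orbit p mu)
    (hdisj : I ∩ J = ∅)
    (hI1 : (1 : kˣ) ∉ I) (hI1' : (-1 : kˣ) ∉ I)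
    (hJ1 : (1 : kˣ) ∉ J) (hJ1' : (-1 : kˣ) ∉ J)
    (ν₁ ν₂ : kˣ →₀ ℕ) (hν₁ : IsDimVec I ν₁) (hν₂ : IsDimVec J ν₂)
    (m₁ m₂ : ℕ) (hm₁ : height ν₁ = 2 * m₁) (hm₂ : height ν₂ = 2 * m₂)
    (e : VV k p q (ν₁ + ν₂) (m₁ + m₂))
    (he : e = ∑ i ∈ thetaSeqs ν₁ m₁, ∑ j ∈ thetaSeqs ν₂ m₂,
      vmk p q (ν₁ + ν₂) (m₁ + m₂) (E (Fin.append i j))) :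
    TwoSidedIdeal.span {e} = (⊤ : TwoSidedIdeal (VV k p q (ν₁ + ν₂) (m₁ + m₂))) := by
  classical
  obtain ⟨lam, hIo⟩ := hI
  obtain ⟨mu, hJo⟩ := hJ
  set f := vmk p q (ν₁ + ν₂) (m₁ + m₂) with hf
  -- basic facts about the orbits
  have hdd : ∀ x : kˣ, x ∈ I → x ∈ J → False := by
    intro x h1 h2
    have : x ∈ I ∩ J := ⟨h1, h2⟩
    rw [hdisj] at this
    exact this
  have hIinv : ∀ x ∈ I, x⁻¹ ∈ I := by
    intro x hx; rw [hIo] at hx ⊢; exact orbit_inv_mem hx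
  have hJinv : ∀ x ∈ J, x⁻¹ ∈ J := by
    intro x hx; rw [hJo] at hx ⊢; exact orbit_inv_mem hx
  have hIp2 : ∀ x ∈ I, p ^ 2 * x ∈ I := by
    intro x hx; rw [hIo] at hx ⊢; exact orbit_p2_mul_mem hx
  have hJp2 : ∀ x ∈ J, p ^ 2 * x ∈ J := by
    intro x hx; rw [hJo] at hx ⊢; exact orbit_p2_mul_mem hx
  have hclass : ∀ x : kˣ, (ν₁ + ν₂) x ≠ 0 → x ∈ I ∨ x ∈ J := by
    intro x hx
    rw [Finsupp.add_apply] at hx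
    by_cases h1 : ν₁ x = 0
    · exact Or.inr (hν₂.1 x (by omega))
    · exact Or.inl (hν₁.1 x h1)
  have noArrowJI : ∀ x y : kˣ, x ∈ J → y ∈ I → ¬ Arrow p x y := by
    intro x y hx hy harr
    rw [Arrow] at harr
    exact hdd x (harr ▸ hIp2 y hy) hx
  have noArrowIJ : ∀ x y : kˣ, x ∈ I → y ∈ J → ¬ Arrow p x y := by
    intro x y hx hy harr
    rw [Arrow] at harr
    exact hdd x hx (harr ▸ hJp2 y hy)
  -- the swap step
  have hstep : ∀ (i : Fin (m₁ + m₂) → kˣ) (s : Fin (m₁ + m₂ - 1)),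
      i (lo s) ∈ J → i (hi s) ∈ I →
      f (E i) = f (Sg s) * f (E (swapAt s i)) * f (Sg s) := by
    intro i s hJlo hIhi
    have hne : i (lo s) ≠ i (hi s) := by
      intro hh
      exact hdd (i (lo s)) (by rw [hh]; exact hIhi) hJlo
    have h1 : ¬ Arrow p (i (lo s)) (i (hi s)) := noArrowJI _ _ hJlo hIhi
    have h2 : ¬ Arrow p (i (hi s)) (i (lo s)) := noArrowIJ _ _ hIhi hJlo
    have r1 : f (Sg s * Sg s * E i) = f (E i) :=
      RingQuot.mkAlgHom_rel k (Rel.sig_sq_none s i hne h1 h2)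
    have r2 : f (Sg s * E i) = f (E (swapAt s i) * Sg s) :=
      RingQuot.mkAlgHom_rel k (Rel.sig_idem s i)
    calc f (E i) = f (Sg s * Sg s * E i) := r1.symm
      _ = f (Sg s) * (f (Sg s) * f (E i)) := by rw [map_mul, map_mul, mul_assoc]
      _ = f (Sg s) * (f (E (swapAt s i)) * f (Sg s)) := by
          rw [← map_mul, r2, map_mul]
      _ = f (Sg s) * f (E (swapAt s i)) * f (Sg s) := by rw [mul_assoc]
  -- the sorted case
  have hsorted : ∀ i : Fin (m₁ + m₂) → kˣ,
      IsThetaSeq (ν₁ + ν₂) i → (∀ l, i l ∈ I ∨ i l ∈ J) →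
      (∀ x y : Fin (m₁ + m₂), x.1 ≤ y.1 → i y ∈ I → i x ∈ I) →
      f (E i) ∈ TwoSidedIdeal.span {e} := by
    intro i hseq hcl hsort
    set F := Finset.univ.filter (fun l : Fin (m₁ + m₂) => i l ∈ I) with hF
    have claim1 : ∀ l : Fin (m₁ + m₂), i l ∈ I ↔ l.1 < F.card := by
      intro l
      constructor
      · intro hl
        have hsub : Finset.Iic l ⊆ F := by
          intro x hx
          rw [Finset.mem_Iic] at hx
          rw [hF, Finset.mem_filter]
          exact ⟨Finset.mem_univ x, hsort x l hx hl⟩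
        have := Finset.card_le_card hsub
        rw [Fin.card_Iic] at this
        omega
      · intro hl
        by_contra hnotmem
        have hsub : F ⊆ Finset.Iio l := by
          intro x hx
          rw [hF, Finset.mem_filter] at hx
          rw [Finset.mem_Iio]
          by_contra hge
          have hge' : l.1 ≤ x.1 := by
            rw [Fin.lt_def] at hge; omega
          exact hnotmem (hsort l x hge' hx.2)
        have := Finset.card_le_card hsub
        rw [Fin.card_Iio] at this
        omega
    -- sum over F plus sum over complement
    have hsumc : (∑ l ∈ F, (Finsupp.single (i l) 1 + Finsupp.single (i l)⁻¹ 1)) +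
        (∑ l ∈ Fᶜ, (Finsupp.single (i l) 1 + Finsupp.single (i l)⁻¹ 1)) = ν₁ + ν₂ := by
      rw [Finset.sum_add_sum_compl]
      exact hseq
    have hres := finsupp_split hdd hν₁.1 hν₂.1
      (fun a ha => mem_of_sum_pair_apply_ne_zero F i
        (fun j hj => by rw [hF, Finset.mem_filter] at hj; exact hj.2) hIinv a ha)
      (fun a ha => mem_of_sum_pair_apply_ne_zero Fᶜ i
        (fun j hj => by
          have : j ∉ F := Finset.mem_compl.mp hj
          rcases hcl j with h | h
          · exact absurd (by rw [hF, Finset.mem_filter]; exact ⟨Finset.mem_univ j, h⟩) this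
          · exact h) hJinv a ha)
      hsumc
    have hcard : F.card = m₁ := by
      have h2 := height_sum_pair F i
      rw [hres.1, hm₁] at h2
      omega
    set a : Fin m₁ → kˣ := fun j => i (Fin.castAdd m₂ j) with haDef
    set b : Fin m₂ → kˣ := fun j => i (Fin.natAdd m₁ j) with hbDef
    have hiab : i = Fin.append a b := by
      funext x
      induction x using Fin.addCases with
      | left j => rw [Fin.append_left]
      | right j => rw [Fin.append_right]
    have haI : ∀ j, a j ∈ I := by
      intro j
      rw [haDef]
      rw [claim1, hcard]
      simpa using j.2
    have hbJ : ∀ j, b j ∈ J := by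
      intro j
      have : ¬ (i (Fin.natAdd m₁ j) ∈ I) := by
        rw [claim1, hcard]
        simp
      rcases hcl (Fin.natAdd m₁ j) with h | h
      · exact absurd h this
      · exact h
    have hsum : (∑ j : Fin m₁, (Finsupp.single (a j) 1 + Finsupp.single (a j)⁻¹ 1)) +
        (∑ j : Fin m₂, (Finsupp.single (b j) 1 + Finsupp.single (b j)⁻¹ 1)) = ν₁ + ν₂ := by
      rw [← hseq, Fin.sum_univ_add]
    have hAB := finsupp_split hdd hν₁.1 hν₂.1
      (fun x hx => mem_of_sum_pair_apply_ne_zero Finset.univ a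
        (fun j _ => haI j) hIinv x hx)
      (fun x hx => mem_of_sum_pair_apply_ne_zero Finset.univ b
        (fun j _ => hbJ j) hJinv x hx)
      hsum
    have haT : a ∈ thetaSeqs ν₁ m₁ :=
      mem_thetaSeqs.mpr ⟨fun j => support_of_isThetaSeq hAB.1 j, hAB.1⟩
    have hbT : b ∈ thetaSeqs ν₂ m₂ :=
      mem_thetaSeqs.mpr ⟨fun j => support_of_isThetaSeq hAB.2 j, hAB.2⟩
    have happeq : ∀ (i' : Fin m₁ → kˣ) (j' : Fin m₂ → kˣ),
        Fin.append i' j' = i → i' = a ∧ j' = b := by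
      intro i' j' hcontra
      rw [hiab] at hcontra
      constructor
      · funext x
        have := congrFun hcontra (Fin.castAdd m₂ x)
        rwa [Fin.append_left, Fin.append_left] at this
      · funext x
        have := congrFun hcontra (Fin.natAdd m₁ x)
        rwa [Fin.append_right, Fin.append_right] at this
    have hterm : ∀ (i' : Fin m₁ → kˣ) (j' : Fin m₂ → kˣ),
        f (E (Fin.append i' j')) * f (E i)
          = if i' = a ∧ j' = b then f (E i) else 0 := by
      intro i' j'
      by_cases hij : i' = a ∧ j' = b
      · rw [if_pos hij, hij.1, hij.2, ← map_mul, ← hiab]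
        exact RingQuot.mkAlgHom_rel k (Rel.idem_mul i)
      · rw [if_neg hij, ← map_mul]
        have hne : Fin.append i' j' ≠ i := fun hcon => hij (happeq i' j' hcon)
        calc f (E (Fin.append i' j') * E i) = f 0 :=
              RingQuot.mkAlgHom_rel k (Rel.idem_orth _ _ hne)
          _ = 0 := map_zero f
    have hmulfull : e * f (E i) = f (E i) := by
      rw [he, ← Finset.sum_product', Finset.sum_mul]
      calc (∑ x ∈ (thetaSeqs ν₁ m₁) ×ˢ (thetaSeqs ν₂ m₂),
              f (E (Fin.append x.1 x.2)) * f (E i))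
          = ∑ x ∈ (thetaSeqs ν₁ m₁) ×ˢ (thetaSeqs ν₂ m₂),
              if x = (a, b) then f (E i) else 0 := by
            refine Finset.sum_congr rfl fun x _ => ?_
            rw [hterm x.1 x.2]
            exact if_congr (Iff.symm Prod.ext_iff) rfl rfl
        _ = if (a, b) ∈ (thetaSeqs ν₁ m₁) ×ˢ (thetaSeqs ν₂ m₂) then f (E i) else 0 :=
            Finset.sum_ite_eq' _ _ _
        _ = f (E i) := by rw [if_pos (Finset.mem_product.mpr ⟨haT, hbT⟩)]
    rw [← hmulfull]
    exact (TwoSidedIdeal.span {e}).mul_mem_right e (f (E i))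
      (TwoSidedIdeal.subset_span (Set.mem_singleton e))
  -- main induction on the measure
  have key : ∀ n : ℕ, ∀ i : Fin (m₁ + m₂) → kˣ,
      IsThetaSeq (ν₁ + ν₂) i → (∀ l, i l ∈ I ∨ i l ∈ J) →
      (∑ l : Fin (m₁ + m₂), if i l ∈ J then (m₁ + m₂) - l.1 else 0) ≤ n →
      f (E i) ∈ TwoSidedIdeal.span {e} := by
    intro n
    induction n with
    | zero =>
        intro i hseq hcl hmeas
        apply hsorted i hseq hcl
        have hnoJ : ∀ l, i l ∉ J := by
          intro l hl
          have hle : (if i l ∈ J then (m₁ + m₂) - l.1 else 0) ≤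
              ∑ l : Fin (m₁ + m₂), if i l ∈ J then (m₁ + m₂) - l.1 else 0 :=
            Finset.single_le_sum (f := fun l : Fin (m₁ + m₂) => if i l ∈ J then (m₁ + m₂) - l.1 else 0)
              (fun _ _ => Nat.zero_le _) (Finset.mem_univ l)
          rw [if_pos hl] at hle
          have := l.2
          omega
        intro x y _ _
        rcases hcl x with h | h
        · exact h
        · exact absurd h (hnoJ x)
    | succ n ih =>
        intro i hseq hcl hmeas
        by_cases hadj : ∃ s : Fin (m₁ + m₂ - 1), i (lo s) ∈ J ∧ i (hi s) ∈ I
        · obtain ⟨s, hsl, hsh⟩ := hadj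
          have hswapseq : IsThetaSeq (ν₁ + ν₂) (swapAt s i) :=
            (Equiv.sum_comp (Equiv.swap (lo s) (hi s))
              (fun l => Finsupp.single (i l) 1 + Finsupp.single (i l)⁻¹ 1)).trans hseq
          have hswapcl : ∀ l, (swapAt s i) l ∈ I ∨ (swapAt s i) l ∈ J := fun l =>
            hcl (Equiv.swap (lo s) (hi s) l)
          have hlt : (∑ l : Fin (m₁ + m₂), if (swapAt s i) l ∈ J then (m₁ + m₂) - l.1 else 0) <
              (∑ l : Fin (m₁ + m₂), if i l ∈ J then (m₁ + m₂) - l.1 else 0) := by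
            rw [← Equiv.sum_comp (Equiv.swap (lo s) (hi s))
              (fun l => if i l ∈ J then (m₁ + m₂) - l.1 else 0)]
            apply Finset.sum_lt_sum
            · intro l _
              by_cases hl1 : l = lo s
              · subst hl1
                rw [show (swapAt s i) (lo s) = i (hi s) by
                  rw [swapAt]; simp [Equiv.swap_apply_left]]
                rw [Equiv.swap_apply_left]
                have : i (hi s) ∉ J := fun hc => hdd _ hsh hc
                simp [this]
              · by_cases hl2 : l = hi s
                · subst hl2
                  rw [show (swapAt s i) (hi s) = i (lo s) by
                    rw [swapAt]; simp [Equiv.swap_apply_right]]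
                  rw [Equiv.swap_apply_right, if_pos hsl, if_pos hsl]
                  have h1 : (lo s).1 = s.1 := rfl
                  have h2 : (hi s).1 = s.1 + 1 := rfl
                  omega
                · rw [show (swapAt s i) l = i l by
                    rw [swapAt]; simp [Equiv.swap_apply_of_ne_of_ne hl1 hl2]]
                  rw [Equiv.swap_apply_of_ne_of_ne hl1 hl2]
            · refine ⟨hi s, Finset.mem_univ _, ?_⟩
              rw [show (swapAt s i) (hi s) = i (lo s) by
                rw [swapAt]; simp [Equiv.swap_apply_right]]
              rw [Equiv.swap_apply_right, if_pos hsl, if_pos hsl]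
              have h1 : (lo s).1 = s.1 := rfl
              have h2 : (hi s).1 = s.1 + 1 := rfl
              have := s.2
              omega
          have hmem := ih (swapAt s i) hswapseq hswapcl (by omega)
          rw [hstep i s hsl hsh]
          exact (TwoSidedIdeal.span {e}).mul_mem_right _ _
            ((TwoSidedIdeal.span {e}).mul_mem_left _ _ hmem)
        · apply hsorted i hseq hcl
          push_neg at hadj
          have hdown : ∀ (t : ℕ) (ht : t + 1 < m₁ + m₂),
              i ⟨t + 1, ht⟩ ∈ I → i ⟨t, by omega⟩ ∈ I := by
            intro t ht hmem
            have hs : t < m₁ + m₂ - 1 := by omega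
            have hthis := hadj ⟨t, hs⟩
            rcases hcl ⟨t, by omega⟩ with h | h
            · exact h
            · exact absurd hmem (hthis h)
          intro x y hle hIy
          obtain ⟨d, hd⟩ : ∃ d, x.1 + d = y.1 := ⟨y.1 - x.1, by omega⟩
          clear hle
          have aux : ∀ d : ℕ, ∀ x : Fin (m₁ + m₂), x.1 + d = y.1 → i x ∈ I := by
            intro d
            induction d with
            | zero =>
                intro x hx
                have : x = y := Fin.ext (by omega)
                rw [this]; exact hIy
            | succ d ihd =>
                intro x hx
                have h1 : x.1 + 1 < m₁ + m₂ := by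
                  have := y.2; omega
                have h2 := ihd ⟨x.1 + 1, h1⟩ (by simp; omega)
                have h3 := hdown x.1 h1 h2
                exact h3
          exact aux d x hd
  -- conclusion
  have h1 : (1 : VV k p q (ν₁ + ν₂) (m₁ + m₂)) =
      ∑ i ∈ thetaSeqs (ν₁ + ν₂) (m₁ + m₂), f (E i) := by
    have hrel : f (∑ i ∈ thetaSeqs (ν₁ + ν₂) (m₁ + m₂), E i) = f 1 :=
      RingQuot.mkAlgHom_rel k Rel.idem_sum
    rw [map_one] at hrel
    rw [← hrel, map_sum]
  rw [← TwoSidedIdeal.one_mem_iff, h1]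
  apply sum_mem
  intro i hi
  rw [mem_thetaSeqs] at hi
  exact key _ i hi.2
    (fun l => hclass (i l) (Finsupp.mem_support_iff.mp (hi.1 l))) le_rfl

end VVPaper
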